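/- arXiv:2603.03858 — 6 statements merged into one kernel-verified Lean document; each statement's English description precedes it below -/
import Mathlib

section
/- Let (R, m, k) be a Noetherian local ring with m^2 generated by at most 2 elements, and suppose m^3 ≠ 0. If x ∈ m \ m^2 satisfies m^2 = x·m, then x^2 ∉ m^3. -/
open IsLocalRing

/-- If `(R, m, k)` is a Noetherian local ring with `m^2` generated by at most 2
elements and `m^3 ≠ 0`, and `x ∈ m \ m^2` satisfies `m^2 = x·m`, then `x^2 ∉ m^3`. -/
theorem stmt1 {R : Type*} [CommRing R] [IsNoetherianRing R] [IsLocalRing R]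
    (hgen : ∃ s : Finset R, s.card ≤ 2 ∧ Ideal.span (s : Set R) = (maximalIdeal R) ^ 2)
    (h3 : (maximalIdeal R) ^ 3 ≠ ⊥)
    (x : R) (hx : x ∈ maximalIdeal R) (hx2 : x ∉ (maximalIdeal R) ^ 2)
    (hxm : (maximalIdeal R) ^ 2 = Ideal.span {x} * maximalIdeal R) :
    x ^ 2 ∉ (maximalIdeal R) ^ 3 := by
  have key : (maximalIdeal R) ^ 3 = Ideal.span {x ^ 2} * maximalIdeal R := by
    have h1 : (maximalIdeal R) ^ 3 = (maximalIdeal R) ^ 2 * maximalIdeal R := by ring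
    rw [h1, hxm, mul_assoc,
      show maximalIdeal R * maximalIdeal R = (maximalIdeal R) ^ 2 from (sq _).symm, hxm,
      ← mul_assoc, Ideal.span_singleton_mul_span_singleton, ← sq]
  intro hmem
  rw [key] at hmem
  obtain ⟨y, hy, hxy⟩ := Ideal.mem_span_singleton_mul.mp hmem
  have hu : IsUnit (1 - y) := IsLocalRing.isUnit_one_sub_self_of_mem_nonunits y hy
  have hx0 : x ^ 2 = 0 := by
    have h0 : x ^ 2 * (1 - y) = 0 := by linear_combination -hxy
    obtain ⟨u, hu'⟩ := hu
    have := congrArg (· * (↑u⁻¹ : R)) h0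
    simpa [← hu', mul_assoc] using this
  apply h3
  rw [key, hx0, Ideal.span_singleton_eq_bot.mpr rfl]
  simp
end

section
/- Let (R, m, k) be an Artinian local ring with m^3 = 0 and dim_k(m^2) = 2. Then there exists x ∈ m \ m^2 such that m^2 = x·m. -/
open IsLocalRing

/-- `mu I` is the minimal number of generators of the ideal `I`. -/
noncomputable def mu {R : Type*} [CommRing R] (I : Ideal R) : ℕ :=
  sInf {n | ∃ s : Finset R, s.card = n ∧ Ideal.span (s : Set R) = I}

/-- In a vector space spanned by two elements, any proper subspace containing a
nonzero vector `w` is contained in the line spanned by `w`. -/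
theorem aux_dim2 {K M : Type*} [Field K] [AddCommGroup M] [Module K M]
    {a b : M} (hspan : Submodule.span K {a, b} = ⊤)
    {N : Submodule K M} (hN : N ≠ ⊤) {w : M} (hw : w ∈ N) (hw0 : w ≠ 0) :
    N ≤ Submodule.span K {w} := by
  classical
  intro u hu
  by_contra hns
  haveI hfin : Module.Finite K M := by
    refine ⟨⟨{a, b}, ?_⟩⟩
    rwa [Finset.coe_insert, Finset.coe_singleton]
  have hind : LinearIndependent K ![u, w] := by
    rw [linearIndependent_fin2]
    refine ⟨by simpa using hw0, fun c hc => ?_⟩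
    exact hns (Submodule.mem_span_singleton.mpr ⟨c, by simpa using hc⟩)
  have hle2 : Module.finrank K M ≤ 2 := by
    classical
    rw [← finrank_top K M, ← hspan]
    refine le_trans (finrank_span_le_card _) ?_
    rw [Set.toFinset_insert, Set.toFinset_singleton]
    exact le_trans (Finset.card_insert_le _ _) (by simp)
  have hfr : Module.finrank K M = 2 := by
    refine le_antisymm hle2 ?_
    simpa using hind.fintype_card_le_finrank
  have htop : Submodule.span K (Set.range ![u, w]) = ⊤ :=
    hind.span_eq_top_of_card_eq_finrank (by simp [hfr])
  apply hN
  rw [eq_top_iff, ← htop]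
  apply Submodule.span_le.mpr
  intro z hz
  rcases hz with ⟨i, rfl⟩
  fin_cases i
  · exact hu
  · exact hw

/-- The key engine: if `m^2` is generated by two elements, `m` kills `m^2`, and `J` is an ideal
properly contained in `m^2` containing a nonzero element `w`, then `J ⊆ (w)`. -/
theorem engine {R : Type*} [CommRing R] (m : Ideal R) [m.IsMaximal]
    (htor : ∀ x ∈ m, ∀ y ∈ m ^ 2, x * y = 0)
    {a b : R} (hgen : Ideal.span {a, b} = m ^ 2)
    (J : Ideal R) (hJle : J ≤ m ^ 2) (hJne : J ≠ m ^ 2)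
    {w : R} (hw : w ∈ J) (hw0 : w ≠ 0) :
    ∀ u ∈ J, u ∈ Ideal.span {w} := by
  intro u hu
  have ha2 : a ∈ m ^ 2 := hgen ▸ Ideal.subset_span (by simp)
  have hb2 : b ∈ m ^ 2 := hgen ▸ Ideal.subset_span (by simp)
  set M := ↥(m ^ 2) with hM
  have htor2 : Module.IsTorsionBySet R M (m : Set R) := by
    intro x r
    apply Subtype.ext
    show r.1 • (x : R) = 0
    rw [smul_eq_mul]
    exact htor r.1 r.2 x.1 x.2
  letI : Field (R ⧸ m) := Ideal.Quotient.field m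
  letI : Module (R ⧸ m) M := htor2.module
  have key : ∀ (r : R) (v : M), (Ideal.Quotient.mk m r) • v = r • v := fun _ _ => rfl
  have hspanT : Submodule.span (R ⧸ m) ({⟨a, ha2⟩, ⟨b, hb2⟩} : Set M) = ⊤ := by
    rw [Submodule.eq_top_iff']
    intro v
    have hv2 : (v : R) ∈ Ideal.span {a, b} := by rw [hgen]; exact v.2
    obtain ⟨r, s, hrs⟩ := Ideal.mem_span_pair.mp hv2
    have hv : v = Ideal.Quotient.mk m r • (⟨a, ha2⟩ : M) +
        Ideal.Quotient.mk m s • (⟨b, hb2⟩ : M) := by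
      apply Subtype.ext
      rw [key, key]
      simp only [Submodule.coe_add, SetLike.val_smul, smul_eq_mul]
      exact hrs.symm
    rw [hv]
    exact add_mem
      (Submodule.smul_mem _ _ (Submodule.subset_span (by simp)))
      (Submodule.smul_mem _ _ (Submodule.subset_span (by simp)))
  let N : Submodule (R ⧸ m) M :=
    { carrier := {v : M | (v : R) ∈ J}
      add_mem' := fun h1 h2 => J.add_mem h1 h2
      zero_mem' := J.zero_mem
      smul_mem' := by
        intro c v hv
        obtain ⟨r, rfl⟩ := Ideal.Quotient.mk_surjective c
        rw [Set.mem_setOf_eq, key]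
        show (r • (v : R)) ∈ J
        rw [smul_eq_mul]
        exact J.mul_mem_left r hv }
  have hNne : N ≠ ⊤ := by
    intro hNt
    apply hJne
    refine le_antisymm hJle fun z hz => ?_
    have : (⟨z, hz⟩ : M) ∈ N := hNt ▸ Submodule.mem_top
    exact this
  have hwN : (⟨w, hJle hw⟩ : M) ∈ N := hw
  have hw0' : (⟨w, hJle hw⟩ : M) ≠ 0 := fun h => hw0 (congrArg Subtype.val h)
  have huN : (⟨u, hJle hu⟩ : M) ∈ N := hu
  have := aux_dim2 hspanT hNne hwN hw0' huN
  obtain ⟨c, hc⟩ := Submodule.mem_span_singleton.mp this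
  obtain ⟨r, rfl⟩ := Ideal.Quotient.mk_surjective c
  rw [key] at hc
  have : r * w = u := congrArg Subtype.val hc
  exact Ideal.mem_span_singleton'.mpr ⟨r, this⟩

/-- If `(R, m, k)` is an Artinian local ring with `m^3 = 0` and `m^2` a
2-dimensional `k`-vector space (equivalently, minimally generated by 2 elements), then there
exists `x ∈ m \ m^2` such that `m^2 = x·m`. -/
theorem stmt2 {R : Type*} [CommRing R] [IsArtinianRing R] [IsLocalRing R]
    (h3 : (maximalIdeal R) ^ 3 = ⊥)
    (hdim : mu ((maximalIdeal R) ^ 2) = 2) :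
    ∃ x ∈ maximalIdeal R, x ∉ (maximalIdeal R) ^ 2 ∧
      (maximalIdeal R) ^ 2 = Ideal.span {x} * maximalIdeal R := by
  classical
  set m : Ideal R := maximalIdeal R with hmdef
  -- basic facts from `mu = 2`
  have hSne : {n | ∃ s : Finset R, s.card = n ∧ Ideal.span (s : Set R) = m ^ 2}.Nonempty := by
    by_contra h
    rw [Set.not_nonempty_iff_eq_empty] at h
    rw [mu, h, Nat.sInf_empty] at hdim
    exact two_ne_zero hdim.symm
  have hlb : ∀ n ∈ {n | ∃ s : Finset R, s.card = n ∧ Ideal.span (s : Set R) = m ^ 2}, 2 ≤ n :=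
    fun n hn => hdim ▸ Nat.sInf_le hn
  have h2mem := Nat.sInf_mem hSne
  rw [← mu, hdim] at h2mem
  obtain ⟨s, hs2, hss⟩ := h2mem
  obtain ⟨a, b, -, hsab⟩ := Finset.card_eq_two.mp hs2
  have hgen : Ideal.span ({a, b} : Set R) = m ^ 2 := by
    rw [hsab] at hss
    rwa [Finset.coe_insert, Finset.coe_singleton] at hss
  have hm2ne : m ^ 2 ≠ ⊥ := by
    intro h
    have : (0 : ℕ) ∈ {n | ∃ s : Finset R, s.card = n ∧ Ideal.span (s : Set R) = m ^ 2} :=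
      ⟨∅, by simp, by simp [h]⟩
    exact absurd (hlb 0 this) (by norm_num)
  have hnotprin : ∀ w : R, Ideal.span {w} ≠ m ^ 2 := by
    intro w hweq
    have : (1 : ℕ) ∈ {n | ∃ s : Finset R, s.card = n ∧ Ideal.span (s : Set R) = m ^ 2} :=
      ⟨{w}, Finset.card_singleton w, by simpa using hweq⟩
    exact absurd (hlb 1 this) (by norm_num)
  have hmm : m * m = m ^ 2 := (pow_two m).symm
  have htor : ∀ x ∈ m, ∀ y ∈ m ^ 2, x * y = 0 := by
    intro x hx y hy
    have : y * x ∈ m ^ 3 := by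
      rw [pow_succ]
      exact Ideal.mul_mem_mul hy hx
    rw [h3] at this
    rw [mul_comm]
    exact (Submodule.mem_bot R).mp this
  -- the key existence statement
  have key : ∃ x ∈ m, Ideal.span {x} * m = m ^ 2 := by
    by_contra H
    push_neg at H
    -- some product is nonzero
    obtain ⟨x, hx, y, hy, hxy0⟩ : ∃ x ∈ m, ∃ y ∈ m, x * y ≠ 0 := by
      by_contra h
      push_neg at h
      apply hm2ne
      rw [← hmm, eq_bot_iff]
      exact Ideal.mul_le.mpr fun r hr t ht => (Submodule.mem_bot R).mpr (h r hr t ht)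
    have hxy2 : x * y ∈ m ^ 2 := hmm ▸ Ideal.mul_mem_mul hx hy
    -- some product independent of x*y
    obtain ⟨x', hx', y', hy', hw1⟩ : ∃ x' ∈ m, ∃ y' ∈ m, x' * y' ∉ Ideal.span {x * y} := by
      by_contra h
      push_neg at h
      apply hnotprin (x * y)
      refine le_antisymm (Ideal.span_le.mpr (by simpa using hxy2)) ?_
      rw [← hmm]
      exact Ideal.mul_le.mpr h
    have hw10 : x' * y' ≠ 0 := fun h => hw1 (h ▸ Ideal.zero_mem _)
    have hw12 : x' * y' ∈ m ^ 2 := hmm ▸ Ideal.mul_mem_mul hx' hy'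
    -- the sub-lemma: if c*d ≠ 0 then c*m ⊆ (c*d)
    have L : ∀ c ∈ m, ∀ d ∈ m, c * d ≠ 0 → ∀ e ∈ m, c * e ∈ Ideal.span {c * d} := by
      intro c hc d hd hcd e he
      have hJle : Ideal.span {c} * m ≤ m ^ 2 := by
        rw [← hmm]
        exact mul_le_mul' (Ideal.span_le.mpr (by simpa using hc)) le_rfl
      exact engine m htor hgen (Ideal.span {c} * m) hJle (H c hc)
        (Ideal.mul_mem_mul (Ideal.subset_span rfl) hd) hcd (c * e)
        (Ideal.mul_mem_mul (Ideal.subset_span rfl) he)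
    -- intersection of the two lines is zero
    have inter : ∀ v : R, v ∈ Ideal.span {x * y} → v ∈ Ideal.span {x' * y'} → v = 0 := by
      intro v _ h2
      obtain ⟨r, hr⟩ := Ideal.mem_span_singleton'.mp h2
      by_cases hu : IsUnit r
      · exfalso
        apply hw1
        have : (↑hu.unit⁻¹ : R) * v ∈ Ideal.span {x * y} := Ideal.mul_mem_left _ _ ‹_›
        rwa [← hr, ← mul_assoc, IsUnit.val_inv_mul, one_mul] at this
      · have hrm : r ∈ m := hu
        rw [← hr]
        exact htor r hrm (x' * y') hw12
    -- cross products vanish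
    have hxy' : x * y' = 0 := by
      have h1 : x * y' ∈ Ideal.span {x * y} := L x hx y hy hxy0 y' hy'
      have h2 : x * y' ∈ Ideal.span {x' * y'} := by
        have := L y' hy' x' hx' (by rwa [mul_comm]) x hx
        rwa [mul_comm y' x, mul_comm y' x'] at this
      exact inter _ h1 h2
    have hx'y : x' * y = 0 := by
      have h2 : x' * y ∈ Ideal.span {x' * y'} := L x' hx' y' hy' hw10 y hy
      have h1 : x' * y ∈ Ideal.span {x * y} := by
        have := L y hy x hx (by rwa [mul_comm]) x' hx'
        rwa [mul_comm y x', mul_comm y x] at this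
      exact inter _ h1 h2
    -- the element x + x' works, contradiction
    have ht : x + x' ∈ m := m.add_mem hx hx'
    have hJle : Ideal.span {x + x'} * m ≤ m ^ 2 := by
      rw [← hmm]
      exact mul_le_mul' (Ideal.span_le.mpr (by simpa using ht)) le_rfl
    have hty : (x + x') * y = x * y := by rw [add_mul, hx'y, add_zero]
    have hty' : (x + x') * y' = x' * y' := by rw [add_mul, hxy', zero_add]
    have hwJ : x * y ∈ Ideal.span {x + x'} * m := by
      rw [← hty]
      exact Ideal.mul_mem_mul (Ideal.subset_span rfl) hy
    have huJ : x' * y' ∈ Ideal.span {x + x'} * m := by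
      rw [← hty']
      exact Ideal.mul_mem_mul (Ideal.subset_span rfl) hy'
    exact hw1 (engine m htor hgen (Ideal.span {x + x'} * m) hJle (H _ ht) hwJ hxy0 _ huJ)
  obtain ⟨x, hx, hxe⟩ := key
  refine ⟨x, hx, ?_, hxe.symm⟩
  intro hx2
  apply hm2ne
  rw [← hxe, eq_bot_iff]
  intro z hz
  have : Ideal.span {x} * m ≤ m ^ 2 * m :=
    mul_le_mul' (Ideal.span_le.mpr (by simpa using hx2)) le_rfl
  have h3' : m ^ 2 * m = ⊥ := by rw [← pow_succ, h3]
  exact (Submodule.mem_bot R).mpr ((Submodule.mem_bot R).mp (h3' ▸ this hz))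
end

section
/- Let (R, m, k) be an Artinian Gorenstein local ring of embedding dimension at least 2 and Loewy length s. Then for every integer i with 2 ≤ i ≤ s, the quotient ring R/m^i is not Gorenstein. -/
open IsLocalRing

section Prelim

variable {R : Type*} [CommRing R]

lemma mem_ann_iff (I : Ideal R) (r : R) :
    r ∈ Submodule.colon (⊥ : Ideal R) (I : Set R) ↔ ∀ y ∈ I, r * y = 0 := by
  rw [Submodule.mem_colon]; simp [smul_eq_mul]

lemma ann_antitone {I J : Ideal R} (h : I ≤ J) :
    Submodule.colon (⊥ : Ideal R) (J : Set R) ≤ Submodule.colon (⊥ : Ideal R) (I : Set R) := by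
  intro r hr
  rw [mem_ann_iff] at hr ⊢
  exact fun y hy => hr y (h hy)

lemma le_ann_ann (I : Ideal R) : I ≤ Submodule.colon (⊥ : Ideal R) (Submodule.colon (⊥ : Ideal R) (I : Set R) : Set R) := by
  intro r hr
  rw [mem_ann_iff]
  intro y hy
  rw [mem_ann_iff] at hy
  rw [mul_comm]
  exact hy r hr

lemma mem_ann_span_singleton (x r : R) :
    r ∈ Submodule.colon (⊥ : Ideal R) (Ideal.span {x} : Set R) ↔ r * x = 0 := by
  rw [mem_ann_iff]
  constructor
  · intro h; exact h x (Ideal.mem_span_singleton_self x)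
  · intro h y hy
    rcases Ideal.mem_span_singleton'.mp hy with ⟨c, rfl⟩
    rw [show r * (c * x) = c * (r * x) by ring, h, mul_zero]

lemma ann_top_eq_bot : Submodule.colon (⊥ : Ideal R) ((⊤ : Ideal R) : Set R) = ⊥ := by
  apply le_antisymm
  · intro w hw
    rw [mem_ann_iff] at hw
    have := hw 1 trivial
    rw [mul_one] at this
    simp [this]
  · exact bot_le

end Prelim

section Local

variable {R : Type*} [CommRing R] [IsArtinianRing R] [IsLocalRing R]

omit [IsArtinianRing R] in
lemma le_of_le_sup_mul {s : ℕ} (hs1 : (maximalIdeal R) ^ (s + 1) = ⊥)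
    {N C : Ideal R} (h : N ≤ C ⊔ maximalIdeal R * N) : N ≤ C := by
  have key : ∀ t : ℕ, N ≤ C ⊔ (maximalIdeal R) ^ t * N := by
    intro t
    induction t with
    | zero => simp
    | succ t ih =>
        refine ih.trans (sup_le le_sup_left ?_)
        calc (maximalIdeal R) ^ t * N ≤ (maximalIdeal R) ^ t * (C ⊔ maximalIdeal R * N) :=
              Ideal.mul_mono_right h
          _ ≤ C ⊔ (maximalIdeal R) ^ (t + 1) * N := by
              rw [Ideal.mul_sup]
              refine sup_le_sup Ideal.mul_le_right ?_
              rw [show (maximalIdeal R) ^ t * (maximalIdeal R * N)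
                    = (maximalIdeal R) ^ (t+1) * N by rw [pow_succ]; ring]
  have := key (s + 1)
  rwa [hs1, Submodule.bot_mul, sup_bot_eq] at this

omit [IsArtinianRing R] in
/-- essentiality: every nonzero ideal contains the socle generator -/
lemma socle_mem {z₀ : R} (hz : z₀ ≠ 0)
    (hGor : Submodule.colon (⊥ : Ideal R) (maximalIdeal R : Set R) = Ideal.span {z₀})
    {s : ℕ} (hs1 : (maximalIdeal R) ^ (s + 1) = ⊥)
    {I : Ideal R} (hI : I ≠ ⊥) : z₀ ∈ I := by
  obtain ⟨a, haI, ha⟩ := Submodule.exists_mem_ne_zero_of_ne_bot hI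
  set P : ℕ → Prop := fun t => Ideal.span {a} * (maximalIdeal R) ^ t ≠ ⊥ with hP
  have hP0 : P 0 := by
    simp only [hP, pow_zero, mul_one, ne_eq, Ideal.span_singleton_eq_bot]
    exact ha
  have hPs1 : ¬ P (s + 1) := by
    simp [hP, hs1]
  classical
  set t₀ := Nat.findGreatest P (s + 1) with ht₀
  have hPt₀ : P t₀ := Nat.findGreatest_spec (Nat.zero_le _) hP0
  have ht₀le : t₀ ≤ s + 1 := Nat.findGreatest_le _
  have ht₀ne : t₀ ≠ s + 1 := fun h => hPs1 (h ▸ hPt₀)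
  have hnot : ¬ P (t₀ + 1) :=
    Nat.findGreatest_is_greatest (Nat.lt_succ_self _) (by omega)
  have hkill : Ideal.span {a} * (maximalIdeal R) ^ t₀ * maximalIdeal R = ⊥ := by
    have : Ideal.span {a} * (maximalIdeal R) ^ (t₀ + 1) = ⊥ := not_not.mp hnot
    rwa [pow_succ, ← mul_assoc] at this
  obtain ⟨ξ, hξmem, hξ⟩ := Submodule.exists_mem_ne_zero_of_ne_bot hPt₀
  have hξsoc : ξ ∈ Submodule.colon (⊥ : Ideal R) (maximalIdeal R : Set R) := by
    rw [mem_ann_iff]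
    intro y hy
    have : ξ * y ∈ Ideal.span {a} * (maximalIdeal R) ^ t₀ * maximalIdeal R :=
      Ideal.mul_mem_mul hξmem hy
    rwa [hkill, Ideal.mem_bot] at this
  rw [hGor] at hξsoc
  obtain ⟨r, hr⟩ := Ideal.mem_span_singleton'.mp hξsoc
  have hrunit : IsUnit r := by
    by_contra hru
    have hrm : r ∈ maximalIdeal R := IsLocalRing.mem_maximalIdeal r |>.mpr hru
    have : z₀ * r = 0 := by
      have hz₀soc : z₀ ∈ Submodule.colon (⊥ : Ideal R) (maximalIdeal R : Set R) := by
        rw [hGor]; exact Ideal.mem_span_singleton_self z₀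
      exact (mem_ann_iff _ _).mp hz₀soc r hrm
    rw [mul_comm] at hr
    exact hξ (by rw [← hr, this])
  obtain ⟨v, hv⟩ := hrunit.exists_left_inv
  have hzv : z₀ = v * ξ := by
    rw [← hr, ← mul_assoc, hv, one_mul]
  rw [hzv]
  have hξI : ξ ∈ I := by
    have h1 : Ideal.span {a} * (maximalIdeal R) ^ t₀ ≤ Ideal.span {a} := Ideal.mul_le_left
    have h2 : Ideal.span {a} ≤ I := (Ideal.span_singleton_le_iff_mem I).mpr haI
    exact h2 (h1 hξmem)
  exact Ideal.mul_mem_left I v hξI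

/-- a cover from below: for a nonzero ideal, a corank-one-type decomposition -/
lemma exists_cover {s : ℕ} (hs1 : (maximalIdeal R) ^ (s + 1) = ⊥)
    {I : Ideal R} (hI : I ≠ ⊥) :
    ∃ (I' : Ideal R) (a : R), I' < I ∧ I' ⊔ Ideal.span {a} = I ∧
      maximalIdeal R * I ≤ I' ∧ a ∈ I := by
  have hmI : maximalIdeal R * I ≠ I := by
    intro h
    apply hI
    have h2 : I ≤ ⊥ ⊔ maximalIdeal R * I := by rw [h]; simp
    have := le_of_le_sup_mul hs1 h2
    exact le_bot_iff.mp this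
  have hmIle : maximalIdeal R * I ≤ I := Ideal.mul_le_right
  obtain ⟨a, haI, hanm⟩ := SetLike.exists_of_lt (lt_of_le_of_ne hmIle hmI)
  set S : Set (Ideal R) := {K | maximalIdeal R * I ≤ K ∧ K ≤ I ∧ a ∉ K} with hS
  have hmIS : maximalIdeal R * I ∈ S := ⟨le_refl _, hmIle, hanm⟩
  obtain ⟨I', -, hmax⟩ := zorn_le_nonempty₀ S (fun c hcS hchain y hy => by
      refine ⟨sSup c, ⟨?_, ?_, ?_⟩, fun z hz => le_sSup hz⟩
      · exact le_trans (hcS hy).1 (le_sSup hy)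
      · exact sSup_le (fun K hK => (hcS hK).2.1)
      · intro hmem
        obtain ⟨K, hKc, haK⟩ := (Submodule.mem_sSup_of_directed ⟨y, hy⟩
          (hchain.directedOn)).mp hmem
        exact (hcS hKc).2.2 haK) _ hmIS
  obtain ⟨hI'1, hI'2, hI'3⟩ := hmax.prop
  refine ⟨I', a, lt_of_le_of_ne hI'2 (fun h => hI'3 (h ▸ haI)), ?_, hI'1, haI⟩
  apply le_antisymm
  · exact sup_le hI'2 ((Ideal.span_singleton_le_iff_mem I).mpr haI)
  · intro c hcI
    by_contra hc
    have hcI' : c ∉ I' := fun h => hc (Submodule.mem_sup_left h)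
    have hKS : I' ⊔ Ideal.span {c} ∈ S := by
      refine ⟨le_trans hI'1 le_sup_left,
        sup_le hI'2 ((Ideal.span_singleton_le_iff_mem I).mpr hcI), ?_⟩
      intro haK
      obtain ⟨j, hj, w, hw, hjw⟩ := Submodule.mem_sup.mp haK
      obtain ⟨r, rfl⟩ := Ideal.mem_span_singleton'.mp hw
      by_cases hr : r ∈ maximalIdeal R
      · apply hI'3
        have : r * c ∈ maximalIdeal R * I := Ideal.mul_mem_mul hr hcI
        rw [← hjw]
        exact Submodule.add_mem _ hj (hI'1 this)
      · have hu : IsUnit r := IsLocalRing.notMem_maximalIdeal.mp hr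
        obtain ⟨v, hv⟩ := hu.exists_left_inv
        apply hc
        have hcv : c = v * (a - j) := by
          have : r * c = a - j := by rw [← hjw]; ring
          rw [← this, ← mul_assoc, hv, one_mul]
        rw [hcv]
        have : a - j ∈ I' ⊔ Ideal.span {a} :=
          Submodule.sub_mem _ (Submodule.mem_sup_right (Ideal.mem_span_singleton_self a))
            (Submodule.mem_sup_left hj)
        exact Ideal.mul_mem_left _ v this
    have hle : I' ≤ I' ⊔ Ideal.span {c} := le_sup_left
    have := hmax.eq_of_le hKS hle
    exact hcI' (this ▸ Submodule.mem_sup_right (Ideal.mem_span_singleton_self c))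

/-- The key duality step: if `b ∉ I` then some annihilator element of `I` detects `b`. -/
lemma ann_detect {z₀ : R} (hz : z₀ ≠ 0)
    (hGor : Submodule.colon (⊥ : Ideal R) (maximalIdeal R : Set R) = Ideal.span {z₀})
    {s : ℕ} (hs1 : (maximalIdeal R) ^ (s + 1) = ⊥) :
    ∀ I : Ideal R, ∀ b : R, b ∉ I → ∃ w ∈ Submodule.colon (⊥ : Ideal R) (I : Set R), w * b ≠ 0 := by
  intro I
  induction I using IsArtinian.induction with
  | _ I IH => ?_
  intro b hb
  by_cases hI : I = ⊥
  · subst hI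
    have hbne : b ≠ 0 := by simpa using hb
    have hspanb : Ideal.span {b} ≠ ⊥ := by simpa [Ideal.span_singleton_eq_bot] using hbne
    have hzmem : z₀ ∈ Ideal.span {b} := socle_mem hz hGor hs1 hspanb
    obtain ⟨w, hw⟩ := Ideal.mem_span_singleton'.mp hzmem
    refine ⟨w, ?_, by rw [hw]; exact hz⟩
    rw [mem_ann_iff]
    intro y hy
    rw [Ideal.mem_bot] at hy
    rw [hy, mul_zero]
  · obtain ⟨I', a, hlt, hsup, hmII', haI⟩ := exists_cover hs1 hI
    have haI' : a ∉ I' := by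
      intro h
      apply absurd hsup
      have heq : I' ⊔ Ideal.span {a} = I' := by
        rw [sup_eq_left]
        exact (Ideal.span_singleton_le_iff_mem I').mpr h
      rw [heq]
      exact ne_of_lt hlt
    obtain ⟨u, huann, hua⟩ := IH I' hlt a haI'
    have hsoc_mem : ∀ w ∈ Submodule.colon (⊥ : Ideal R) (I' : Set R), w * a ∈ Ideal.span {z₀} := by
      intro w hw
      rw [← hGor, mem_ann_iff]
      intro c hc
      have hca : c * a ∈ I' := hmII' (Ideal.mul_mem_mul hc haI)
      rw [mul_assoc, mul_comm a c]
      exact (mem_ann_iff _ _).mp hw _ hca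
    obtain ⟨c₁, hc₁⟩ := Ideal.mem_span_singleton'.mp (hsoc_mem u huann)
    have hz₀soc : ∀ c ∈ maximalIdeal R, z₀ * c = 0 := by
      intro c hc
      have hzz : z₀ ∈ Submodule.colon (⊥ : Ideal R) (maximalIdeal R : Set R) := by
        rw [hGor]; exact Ideal.mem_span_singleton_self z₀
      exact (mem_ann_iff _ _).mp hzz c hc
    have hc₁u : IsUnit c₁ := by
      by_contra hcu
      have : c₁ ∈ maximalIdeal R := (IsLocalRing.mem_maximalIdeal c₁).mpr hcu
      exact hua (by rw [← hc₁, mul_comm, hz₀soc c₁ this])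
    obtain ⟨v, hv⟩ := hc₁u.exists_left_inv
    set u₀ := v * u with hu₀
    have hu₀ann : u₀ ∈ Submodule.colon (⊥ : Ideal R) (I' : Set R) := Ideal.mul_mem_left _ v huann
    have hu₀a : u₀ * a = z₀ := by
      rw [hu₀, mul_assoc, ← hc₁, ← mul_assoc, hv, one_mul]
    by_contra hcon
    push_neg at hcon
    have hmul_ann : ∀ c ∈ maximalIdeal R, u₀ * c ∈ Submodule.colon (⊥ : Ideal R) (I : Set R) := by
      intro c hc
      rw [mem_ann_iff]
      intro y hy
      have hcy : c * y ∈ I' := hmII' (Ideal.mul_mem_mul hc hy)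
      rw [mul_assoc]
      exact (mem_ann_iff _ _).mp hu₀ann _ hcy
    have hu₀b : u₀ * b ∈ Ideal.span {z₀} := by
      rw [← hGor, mem_ann_iff]
      intro c hc
      rw [show u₀ * b * c = (u₀ * c) * b by ring]
      exact hcon _ (hmul_ann c hc)
    obtain ⟨r, hr⟩ := Ideal.mem_span_singleton'.mp hu₀b
    have hkey : ∀ w ∈ Submodule.colon (⊥ : Ideal R) (I' : Set R), w * (b - r * a) = 0 := by
      intro w hw
      obtain ⟨t, ht⟩ := Ideal.mem_span_singleton'.mp (hsoc_mem w hw)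
      have hwt : w - t * u₀ ∈ Submodule.colon (⊥ : Ideal R) (I : Set R) := by
        rw [mem_ann_iff]
        intro y hy
        rw [← hsup] at hy
        obtain ⟨j, hj, p, hp, hjp⟩ := Submodule.mem_sup.mp hy
        obtain ⟨q, rfl⟩ := Ideal.mem_span_singleton'.mp hp
        have h1 : (w - t * u₀) * j = 0 := by
          have hmem : w - t * u₀ ∈ Submodule.colon (⊥ : Ideal R) (I' : Set R) := Submodule.sub_mem _ hw
            (Ideal.mul_mem_left _ t hu₀ann)
          exact (mem_ann_iff _ _).mp hmem j hj
        have h2 : (w - t * u₀) * a = 0 := by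
          have expand : (w - t * u₀) * a = w * a - t * (u₀ * a) := by ring
          rw [expand, hu₀a, ← ht]; ring
        rw [← hjp, mul_add, h1, show (w - t * u₀) * (q * a) = q * ((w - t * u₀) * a) by ring,
          h2, mul_zero, add_zero]
      have hwb : (w - t * u₀) * b = 0 := hcon _ hwt
      have hthis : w * b = t * (u₀ * b) := by linear_combination hwb
      linear_combination hthis - t * hr + r * ht
    have hbra : b - r * a ∈ I' := by
      by_contra hbra
      obtain ⟨w, hw1, hw2⟩ := IH I' hlt _ hbra
      exact hw2 (hkey w hw1)
    apply hb
    rw [← hsup]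
    have hbe : b = (b - r * a) + r * a := by ring
    rw [hbe]
    exact Submodule.add_mem _ (Submodule.mem_sup_left hbra)
      (Submodule.mem_sup_right (Ideal.mul_mem_left _ r (Ideal.mem_span_singleton_self a)))

/-- double annihilator property for Artinian local rings with simple socle -/
lemma ann_ann {z₀ : R} (hz : z₀ ≠ 0)
    (hGor : Submodule.colon (⊥ : Ideal R) (maximalIdeal R : Set R) = Ideal.span {z₀})
    {s : ℕ} (hs1 : (maximalIdeal R) ^ (s + 1) = ⊥) (I : Ideal R) :
    Submodule.colon (⊥ : Ideal R) (Submodule.colon (⊥ : Ideal R) (I : Set R) : Set R) = I := by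
  apply le_antisymm
  · intro b hbmem
    by_contra hb
    obtain ⟨w, hw1, hw2⟩ := ann_detect hz hGor hs1 I b hb
    exact hw2 (by rw [mul_comm]; exact (mem_ann_iff _ _).mp hbmem w hw1)
  · exact le_ann_ann I

end Local

/-- Let `(R, m, k)` be an Artinian Gorenstein local ring (socle `(0 :_R m)` is a
one-dimensional `k`-vector space, i.e. generated by a single nonzero element annihilated by `m`)
of embedding dimension at least 2 and Loewy length `s`.  Then for every `2 ≤ i ≤ s` the quotient
ring `R/m^i` is not Gorenstein. -/
theorem stmt3 {R : Type*} [CommRing R] [IsArtinianRing R] [IsLocalRing R]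
    (hGor : ∃ z : R, z ≠ 0 ∧ Submodule.colon (⊥ : Ideal R) ((maximalIdeal R : Ideal R) : Set R) = Ideal.span {z})
    (hedim : 2 ≤ mu (maximalIdeal R))
    (s : ℕ) (hs : (maximalIdeal R) ^ s ≠ ⊥) (hs1 : (maximalIdeal R) ^ (s + 1) = ⊥)
    (i : ℕ) (hi2 : 2 ≤ i) (his : i ≤ s) :
    ¬ ∃ z : R ⧸ (maximalIdeal R) ^ i, z ≠ 0 ∧
        Submodule.colon (⊥ : Ideal (R ⧸ (maximalIdeal R) ^ i))
          (((maximalIdeal R).map (Ideal.Quotient.mk ((maximalIdeal R) ^ i))) : Set (R ⧸ (maximalIdeal R) ^ i))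
          = Ideal.span {z} := by
  obtain ⟨z₀, hz₀ne, hsoc⟩ := hGor
  set m : Ideal R := maximalIdeal R with hm
  set π := Ideal.Quotient.mk (m ^ i) with hπ
  rintro ⟨z, hzne, hid⟩
  -- powers of m are distinct up to s, and nonzero
  have hpow_bot : ∀ j, j ≤ s → m ^ j ≠ ⊥ := by
    intro j hj hbot
    exact hs (le_bot_iff.mp ((Ideal.pow_le_pow_right hj).trans hbot.le))
  have hpow_ne : ∀ j, j ≤ s → m ^ j ≠ m ^ (j + 1) := by
    intro j hj heq
    have key : ∀ t : ℕ, m ^ j = m ^ (j + t) := by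
      intro t
      induction t with
      | zero => rfl
      | succ t ih =>
          rw [show j + (t+1) = (j+1) + t by omega, pow_add, ← heq, ← pow_add]
          exact ih
    have := key (s + 1 - j)
    rw [show j + (s + 1 - j) = s + 1 by omega, hs1] at this
    exact hpow_bot j hj this
  -- the colon ideal M = (m^i : m)
  set M : Ideal R := Submodule.colon (m ^ i) (m : Set R) with hM
  have hmem_M : ∀ w : R, w ∈ M ↔ ∀ c ∈ m, w * c ∈ m ^ i := by
    intro w
    rw [hM, Submodule.mem_colon]
    simp [smul_eq_mul]
  -- correspondence with the quotient socle
  have hπsurj : Function.Surjective π := Ideal.Quotient.mk_surjective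
  have hMcorr : ∀ w : R, w ∈ M ↔ π w ∈ Submodule.colon (⊥ : Ideal (R ⧸ m ^ i)) (m.map π : Set (R ⧸ m ^ i)) := by
    intro w
    constructor
    · intro hw
      rw [Submodule.mem_colon]
      intro p hp
      obtain ⟨c, hc, rfl⟩ := Ideal.mem_map_iff_of_surjective π hπsurj |>.mp hp
      rw [smul_eq_mul, ← map_mul]
      rw [Submodule.mem_bot, Ideal.Quotient.eq_zero_iff_mem]
      exact (hmem_M w).mp hw c hc
    · intro hw
      rw [hmem_M]
      intro c hc
      have hπc : π c ∈ m.map π := Ideal.mem_map_of_mem π hc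
      have := Submodule.mem_colon.mp hw (π c) hπc
      rw [smul_eq_mul, ← map_mul, Submodule.mem_bot, Ideal.Quotient.eq_zero_iff_mem] at this
      exact this
  -- lift z
  obtain ⟨z', hz'π⟩ := hπsurj z
  have hz'M : z' ∈ M := by
    rw [hMcorr, hz'π, hid]
    exact Ideal.mem_span_singleton_self z
  have hz'nm : z' ∉ m ^ i := by
    intro h
    exact hzne (by rw [← hz'π, Ideal.Quotient.eq_zero_iff_mem]; exact h)
  have hspan : ∀ w ∈ M, ∃ r : R, w - r * z' ∈ m ^ i := by
    intro w hw
    have : π w ∈ Ideal.span {z} := by rw [← hid, ← hMcorr]; exact hw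
    obtain ⟨rq, hrq⟩ := Ideal.mem_span_singleton'.mp this
    obtain ⟨r, rfl⟩ := hπsurj rq
    refine ⟨r, ?_⟩
    rw [← Ideal.Quotient.eq_zero_iff_mem, map_sub, map_mul, hz'π, hrq, sub_self]
  -- the independent pair a, b
  have hs2 : 2 ≤ s := le_trans hi2 his
  have hm2 : m ^ 2 ≤ m := by
    have := Ideal.pow_le_pow_right (I := m) (by omega : 1 ≤ 2)
    rwa [pow_one] at this
  have hmne2 : m ^ 2 ≠ m := by
    intro h
    have := hpow_ne 1 (by omega)
    rw [pow_one] at this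
    exact this h.symm
  obtain ⟨a, ham, ha2⟩ := SetLike.exists_of_lt (lt_of_le_of_ne hm2 hmne2)
  have hmu_contr : ∀ c : R, m ≠ Ideal.span {c} := by
    intro c h
    have h1 : mu m ≤ 1 := by
      apply Nat.sInf_le
      exact ⟨{c}, Finset.card_singleton c, by rw [Finset.coe_singleton]; exact h.symm⟩
    omega
  have hbexists : ¬ (m ≤ Ideal.span {a} ⊔ m ^ 2) := by
    intro h
    have h2 : m ≤ Ideal.span {a} ⊔ m * m := by rwa [← pow_two]
    have h3 := le_of_le_sup_mul hs1 h2
    exact hmu_contr a (le_antisymm h3 ((Ideal.span_singleton_le_iff_mem m).mpr ham))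
  obtain ⟨b, hbm, hbnot⟩ := SetLike.not_le_iff_exists.mp hbexists
  have hindep : ∀ α β : R, α * a + β * b ∈ m ^ 2 → α ∈ m ∧ β ∈ m := by
    intro α β hαβ
    have hβ : β ∈ m := by
      by_contra hβ
      obtain ⟨v, hv⟩ := (IsLocalRing.notMem_maximalIdeal.mp hβ).exists_left_inv
      apply hbnot
      have hbeq : b = v * (α * a + β * b) - v * α * a := by
        linear_combination (-b) * hv
      rw [hbeq]
      apply Submodule.sub_mem
      · exact Submodule.mem_sup_right (Ideal.mul_mem_left _ v hαβ)
      · exact Submodule.mem_sup_left (Ideal.mul_mem_left _ (v * α)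
          (Ideal.mem_span_singleton_self a))
    refine ⟨?_, hβ⟩
    by_contra hα
    obtain ⟨v, hv⟩ := (IsLocalRing.notMem_maximalIdeal.mp hα).exists_left_inv
    apply ha2
    have hβb : β * b ∈ m ^ 2 := by rw [pow_two]; exact Ideal.mul_mem_mul hβ hbm
    have hαa : α * a ∈ m ^ 2 := by
      have : α * a = (α * a + β * b) - β * b := by ring
      rw [this]; exact Submodule.sub_mem _ hαβ hβb
    have : a = v * (α * a) := by rw [← mul_assoc, hv, one_mul]
    rw [this]
    exact Ideal.mul_mem_left _ v hαa
  by_cases hi3 : 3 ≤ i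
  case neg =>
    have hieq : i = 2 := by omega
    subst hieq
    have haM : a ∈ M := by
      rw [hmem_M]; intro c hc; rw [pow_two]; exact Ideal.mul_mem_mul ham hc
    have hbM : b ∈ M := by
      rw [hmem_M]; intro c hc; rw [pow_two]; exact Ideal.mul_mem_mul hbm hc
    obtain ⟨r, hra⟩ := hspan a haM
    obtain ⟨r', hrb⟩ := hspan b hbM
    have hcomb : r' * a + (-r) * b ∈ m ^ 2 := by
      have hce : r' * a + (-r) * b = r' * (a - r * z') - r * (b - r' * z') := by ring
      rw [hce]
      exact Submodule.sub_mem _ (Ideal.mul_mem_left _ _ hra) (Ideal.mul_mem_left _ _ hrb)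
    obtain ⟨hr'm, hrm'⟩ := hindep _ _ hcomb
    have hrm : r ∈ m := neg_mem_iff.mp hrm'
    apply ha2
    have hrz : r * z' ∈ m ^ 2 := by
      rw [mul_comm]
      exact (hmem_M z').mp hz'M r hrm
    have hae : a = (a - r * z') + r * z' := by ring
    rw [hae]
    exact Submodule.add_mem _ hra hrz
  case pos =>
    obtain ⟨j, rfl⟩ : ∃ j, i = j + 1 := ⟨i - 1, by omega⟩
    have hj2 : 2 ≤ j := by omega
    have hjs : j ≤ s := by omega
    have hpowle : m ^ (j + 1) ≤ m ^ j := Ideal.pow_le_pow_right (by omega)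
    obtain ⟨x, hxj, hxj1⟩ := SetLike.exists_of_lt
      (lt_of_le_of_ne hpowle (fun h => hpow_ne j hjs h.symm))
    have hxM : x ∈ M := by
      rw [hmem_M]; intro c hc; rw [pow_succ]; exact Ideal.mul_mem_mul hxj hc
    obtain ⟨r, hxr⟩ := hspan x hxM
    have hrunit : IsUnit r := by
      by_contra hru
      have hrm : r ∈ m := (IsLocalRing.mem_maximalIdeal r).mpr hru
      apply hxj1
      have hrz : r * z' ∈ m ^ (j + 1) := by
        rw [mul_comm]; exact (hmem_M z').mp hz'M r hrm
      have hxe : x = (x - r * z') + r * z' := by ring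
      rw [hxe]
      exact Submodule.add_mem _ hxr hrz
    obtain ⟨v, hv⟩ := hrunit.exists_left_inv
    have hz'mem : z' ∈ Ideal.span {x} ⊔ m ^ (j + 1) := by
      have hz'eq : z' = v * x - v * (x - r * z') := by linear_combination (-z') * hv
      rw [hz'eq]
      exact Submodule.sub_mem _
        (Submodule.mem_sup_left (Ideal.mul_mem_left _ v (Ideal.mem_span_singleton_self x)))
        (Submodule.mem_sup_right (Ideal.mul_mem_left _ v hxr))
    have hMle : M ≤ Ideal.span {x} ⊔ m ^ (j + 1) := by
      intro w hw
      obtain ⟨rw', hrw⟩ := hspan w hw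
      have hwe : w = (w - rw' * z') + rw' * z' := by ring
      rw [hwe]
      exact Submodule.add_mem _ (Submodule.mem_sup_right hrw)
        (Ideal.mul_mem_left _ _ hz'mem)
    have hmjM : m ^ j ≤ M := by
      intro w hw; rw [hmem_M]; intro c hc; rw [pow_succ]; exact Ideal.mul_mem_mul hw hc
    have hmjx : m ^ j = Ideal.span {x} := by
      apply le_antisymm
      · have h1 : m ^ j ≤ Ideal.span {x} ⊔ m * m ^ j := by
          have hmm : m * m ^ j = m ^ (j + 1) := by rw [pow_succ]; ring
          rw [hmm]
          exact le_trans hmjM hMle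
        exact le_of_le_sup_mul hs1 h1
      · exact (Ideal.span_singleton_le_iff_mem _).mpr hxj
    have hdd : ∀ I : Ideal R, Submodule.colon (⊥ : Ideal R) (Submodule.colon (⊥ : Ideal R) (I : Set R) : Set R) = I :=
      fun I => ann_ann hz₀ne hsoc hs1 I
    set J : Ideal R := Submodule.colon (⊥ : Ideal R) ((m ^ (j + 1) : Ideal R) : Set R) with hJ
    set W : Ideal R := Submodule.colon (⊥ : Ideal R) ((m ^ j : Ideal R) : Set R) with hW
    have hWJ : W ≤ J := ann_antitone hpowle
    have hannJ : Submodule.colon (⊥ : Ideal R) (J : Set R) = m ^ (j + 1) := by rw [hJ]; exact hdd _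
    have hannW : Submodule.colon (⊥ : Ideal R) (W : Set R) = m ^ j := by rw [hW]; exact hdd _
    have hannmJ : Submodule.colon (⊥ : Ideal R) ((m * J : Ideal R) : Set R) = M := by
      apply le_antisymm
      · intro w hw
        rw [hmem_M]
        intro c hc
        rw [← hannJ, mem_ann_iff]
        intro q hq
        have hcq : c * q ∈ m * J := Ideal.mul_mem_mul hc hq
        rw [mul_assoc]
        exact (mem_ann_iff _ _).mp hw _ hcq
      · intro w hw
        rw [mem_ann_iff]
        intro y hy
        refine Submodule.mul_induction_on hy ?_ ?_
        · intro c hc q hq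
          rw [show w * (c * q) = q * (w * c) by ring]
          have hwc : w * c ∈ m ^ (j + 1) := (hmem_M w).mp hw c hc
          have hq' := hq
          rw [hJ, mem_ann_iff] at hq'
          exact hq' _ hwc
        · intro y1 y2 h1 h2; rw [mul_add, h1, h2, add_zero]
    have hmJW : m * J = W := by
      have h1 := hdd (m * J)
      rw [hannmJ] at h1
      have h2 : M = m ^ j := by
        apply le_antisymm
        · refine hMle.trans (sup_le ?_ ?_)
          · rw [hmjx]
          · exact hpowle
        · exact hmjM
      rw [h2] at h1
      rw [hW, ← h1]
    have hWneJ : W ≠ J := by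
      intro h
      apply hpow_ne j hjs
      rw [← hannW, ← hannJ, h]
    obtain ⟨y, hyJ, hyW⟩ := SetLike.exists_of_lt (lt_of_le_of_ne hWJ hWneJ)
    have hnomid : ∀ P : Ideal R, m ^ (j + 1) ≤ P → P ≤ m ^ j →
        P = m ^ (j + 1) ∨ P = m ^ j := by
      intro P h1 h2
      by_cases hP : P = m ^ (j + 1)
      · exact Or.inl hP
      · right
        obtain ⟨k, hkP, hk1⟩ := SetLike.not_le_iff_exists.mp
          (fun h => hP (le_antisymm h h1))
        have hkx : k ∈ Ideal.span {x} := by rw [← hmjx]; exact h2 hkP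
        obtain ⟨r₁, rfl⟩ := Ideal.mem_span_singleton'.mp hkx
        have hr₁ : r₁ ∉ m := by
          intro hr₁m
          apply hk1
          have hmem : r₁ * x ∈ m * m ^ j := Ideal.mul_mem_mul hr₁m hxj
          rwa [show m * m ^ j = m ^ (j + 1) by rw [pow_succ]; ring] at hmem
        obtain ⟨v₁, hv₁⟩ := (IsLocalRing.notMem_maximalIdeal.mp hr₁).exists_left_inv
        apply le_antisymm h2
        rw [hmjx, Ideal.span_singleton_le_iff_mem]
        have hxe : x = v₁ * (r₁ * x) := by rw [← mul_assoc, hv₁, one_mul]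
        rw [hxe]
        exact Ideal.mul_mem_left _ v₁ hkP
    have hsupJ : Ideal.span {y} ⊔ W ≤ J :=
      sup_le ((Ideal.span_singleton_le_iff_mem J).mpr hyJ) hWJ
    have hP1 : m ^ (j + 1) ≤ Submodule.colon (⊥ : Ideal R) ((Ideal.span {y} ⊔ W : Ideal R) : Set R) := by
      rw [← hannJ]; exact ann_antitone hsupJ
    have hP2 : Submodule.colon (⊥ : Ideal R) ((Ideal.span {y} ⊔ W : Ideal R) : Set R) ≤ m ^ j := by
      rw [← hannW]; exact ann_antitone le_sup_right
    have hJy : J = Ideal.span {y} ⊔ W := by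
      rcases hnomid _ hP1 hP2 with hP | hP
      · have hthis := hdd (Ideal.span {y} ⊔ W)
        rw [hP] at hthis
        rw [hJ, ← hthis]
      · exfalso
        have h2 := hdd (Ideal.span {y} ⊔ W)
        rw [hP] at h2
        apply hyW
        have hymem : y ∈ Ideal.span {y} ⊔ W :=
          Submodule.mem_sup_left (Ideal.mem_span_singleton_self y)
        rw [← h2] at hymem
        rw [hW]
        exact hymem
    have hJley : J ≤ Ideal.span {y} := by
      apply le_of_le_sup_mul hs1 (N := J) (C := Ideal.span {y})
      rw [hmJW]
      exact le_of_eq hJy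
    have hym : y ∈ m := by
      by_contra hym
      obtain ⟨v₂, hv₂⟩ := (IsLocalRing.notMem_maximalIdeal.mp hym).exists_left_inv
      have h1J : (1 : R) ∈ J := by
        rw [← hv₂]; exact Ideal.mul_mem_left _ v₂ hyJ
      have hJtop : J = ⊤ := (Ideal.eq_top_iff_one J).mpr h1J
      have hthis := hannJ
      rw [hJtop, ann_top_eq_bot] at hthis
      exact hpow_bot (j + 1) (by omega) hthis.symm
    have hWm2 : W ≤ m ^ 2 := by
      rw [← hmJW]
      calc m * J ≤ m * Ideal.span {y} := Ideal.mul_mono_right hJley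
        _ ≤ m * m := Ideal.mul_mono_right ((Ideal.span_singleton_le_iff_mem m).mpr hym)
        _ = m ^ 2 := (pow_two m).symm
    have hAnn : ∀ α β : R, α * (a * x) + β * (b * x) ∈ m ^ (j + 2) → α ∈ m ∧ β ∈ m := by
      intro α β hmem
      have hpowmul : m ^ (j + 2) = m ^ 2 * Ideal.span {x} := by
        rw [← hmjx, ← pow_add]; congr 1; omega
      rw [hpowmul] at hmem
      obtain ⟨d, hd, hdx⟩ := Ideal.mem_mul_span_singleton.mp hmem
      have hker : (α * a + β * b - d) * x = 0 := by
        rw [sub_mul, hdx]; ring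
      have hmemW : α * a + β * b - d ∈ W := by
        rw [hW, hmjx]
        exact (mem_ann_span_singleton x _).mpr hker
      have hm2mem : α * a + β * b ∈ m ^ 2 := by
        have h2 : α * a + β * b = (α * a + β * b - d) + d := by ring
        rw [h2]; exact Submodule.add_mem _ (hWm2 hmemW) hd
      exact hindep _ _ hm2mem
    have hab_good : ∀ g ∈ m ^ (j - 1), ∃ p ∈ m, a * g = p * x := by
      intro g hg
      have hag : a * g ∈ Ideal.span {x} := by
        rw [← hmjx, show j = 1 + (j - 1) by omega, pow_add, pow_one]
        exact Ideal.mul_mem_mul ham hg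
      have hbg : b * g ∈ Ideal.span {x} := by
        rw [← hmjx, show j = 1 + (j - 1) by omega, pow_add, pow_one]
        exact Ideal.mul_mem_mul hbm hg
      obtain ⟨p, hpx⟩ := Ideal.mem_span_singleton'.mp hag
      obtain ⟨q, hqx⟩ := Ideal.mem_span_singleton'.mp hbg
      have hzero : q * (a * x) + (-p) * (b * x) = 0 := by
        linear_combination a * hqx - b * hpx
      have hres := hAnn q (-p) (by rw [hzero]; exact Submodule.zero_mem _)
      exact ⟨p, neg_mem_iff.mp hres.2, hpx.symm⟩
    have hax : a * x ∈ m ^ (j + 2) := by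
      have hxmem : x ∈ m * m ^ (j - 1) := by
        rw [show m * m ^ (j - 1) = m ^ j by
          rw [← pow_succ']
          congr 1
          omega]
        exact hxj
      have hind : ∀ w ∈ m * m ^ (j - 1), a * w ∈ m ^ (j + 2) := by
        intro w hw
        refine Submodule.mul_induction_on hw ?_ ?_
        · intro c hc g hg
          obtain ⟨p, hpm, hpe⟩ := hab_good g hg
          rw [show a * (c * g) = c * (a * g) by ring, hpe,
            show c * (p * x) = (c * p) * x by ring]
          have hcp : c * p ∈ m ^ 2 := by rw [pow_two]; exact Ideal.mul_mem_mul hc hpm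
          have hpw : m ^ 2 * Ideal.span {x} = m ^ (j + 2) := by
            rw [← hmjx, ← pow_add]; congr 1; omega
          rw [← hpw]
          exact Ideal.mul_mem_mul hcp (Ideal.mem_span_singleton_self x)
        · intro y1 y2 h1 h2
          rw [mul_add]
          exact Submodule.add_mem _ h1 h2
      exact hind x hxmem
    have hone := hAnn 1 0 (by rw [one_mul, zero_mul, add_zero]; exact hax)
    have h1m : (1 : R) ∈ m := hone.1
    exact (IsLocalRing.maximalIdeal.isMaximal R).ne_top ((Ideal.eq_top_iff_one _).mpr h1m)
end

section
/- Let (R, m, k) be an Artinian Gorenstein local ring with m^2 = x·m for some x ∈ m, with µ(m^2) = m ≥ 2. Then m·((0 :_R x) ∩ m^2) equals the socle (0 :_R m) of R; in particular (0 :_R x) ∩ m^2 is not contained in the socle. -/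
open IsLocalRing

/-- Let `(R, m, k)` be an Artinian Gorenstein local ring with `m^2 = x·m` for some
`x ∈ m` and `µ(m^2) = m ≥ 2`.  Then `m·((0 :_R x) ∩ m^2)` equals the socle `(0 :_R m)` of `R`;
in particular `(0 :_R x) ∩ m^2` is not contained in the socle. -/
theorem stmt5 {R : Type*} [CommRing R] [IsArtinianRing R] [IsLocalRing R]
    (hGor : ∃ z : R, z ≠ 0 ∧ Submodule.colon ⊥ ((maximalIdeal R : Ideal R) : Set R) = Ideal.span {z})
    (x : R) (hx : x ∈ maximalIdeal R)
    (hxm : (maximalIdeal R) ^ 2 = Ideal.span {x} * maximalIdeal R)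
    (m : ℕ) (hm : mu ((maximalIdeal R) ^ 2) = m) (hm2 : 2 ≤ m) :
    maximalIdeal R * (Submodule.colon ⊥ ((Ideal.span {x} : Ideal R) : Set R) ⊓ (maximalIdeal R) ^ 2)
        = Submodule.colon ⊥ ((maximalIdeal R : Ideal R) : Set R) ∧
    ¬ (Submodule.colon ⊥ ((Ideal.span {x} : Ideal R) : Set R) ⊓ (maximalIdeal R) ^ 2
        ≤ Submodule.colon ⊥ ((maximalIdeal R : Ideal R) : Set R)) := by
  classical
  obtain ⟨z, hz0, hsoc⟩ := hGor
  set M : Ideal R := maximalIdeal R with hMdef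
  set J : Ideal R := Submodule.colon ⊥ ((Ideal.span {x} : Ideal R) : Set R) ⊓ M ^ 2 with hJdef
  -- the maximal ideal is nilpotent
  obtain ⟨n, hn⟩ : IsNilpotent M := by
    rw [hMdef, ← IsLocalRing.jacobson_eq_maximalIdeal (⊥ : Ideal R) bot_ne_top]
    exact IsArtinianRing.isNilpotent_jacobson_bot
  -- z kills the maximal ideal
  have hzM : ∀ p ∈ M, z * p = 0 := by
    have hzm : z ∈ Submodule.colon (⊥ : Ideal R) (M : Set R) := by
      rw [hsoc]; exact Ideal.mem_span_singleton_self z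
    intro p hp
    simpa using Submodule.mem_colon.mp hzm p hp
  -- powers of M are multiples of x
  have hstep : ∀ k : ℕ, 1 ≤ k → M ^ (k + 1) = Ideal.span {x} * M ^ k := by
    intro k hk
    induction k with
    | zero => omega
    | succ k ih =>
      rcases Nat.lt_or_ge 1 (k + 1) with h1 | h1
      · have hk1 : 1 ≤ k := by omega
        calc M ^ (k + 1 + 1) = M ^ (k + 1) * M := pow_succ _ _
          _ = Ideal.span {x} * M ^ k * M := by rw [ih hk1]
          _ = Ideal.span {x} * (M ^ k * M) := mul_assoc _ _ _
          _ = Ideal.span {x} * M ^ (k + 1) := by rw [← pow_succ]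
      · have : k = 0 := by omega
        subst this
        simpa [pow_one] using hxm
  -- the socle is contained in every nonzero ideal
  have hess : ∀ I : Ideal R, I ≠ ⊥ → z ∈ I := by
    intro I hI
    obtain ⟨a, haI, ha0⟩ := (Submodule.ne_bot_iff I).mp hI
    have hPex : ∃ k, Ideal.span {a} * M ^ k = ⊥ := ⟨n, by rw [hn]; simp⟩
    set t := Nat.find hPex with htdef
    have htp : Ideal.span {a} * M ^ t = ⊥ := Nat.find_spec hPex
    have ht0 : t ≠ 0 := by
      intro h
      rw [h, pow_zero, mul_one] at htp
      exact ha0 (Ideal.span_singleton_eq_bot.mp htp)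
    have htm : Ideal.span {a} * M ^ (t - 1) ≠ ⊥ := Nat.find_min hPex (by omega)
    have hKsoc : Ideal.span {a} * M ^ (t - 1) ≤ Ideal.span {z} := by
      rw [← hsoc]
      intro b hb
      rw [Submodule.mem_colon]
      intro p hp
      have hbp : b * p ∈ Ideal.span {a} * M ^ (t - 1) * M := Ideal.mul_mem_mul hb hp
      rw [mul_assoc, ← pow_succ, Nat.sub_add_cancel (by omega), htp] at hbp
      simpa using hbp
    obtain ⟨b, hbK, hb0⟩ := (Submodule.ne_bot_iff _).mp htm
    obtain ⟨c, hc⟩ := Ideal.mem_span_singleton'.mp (hKsoc hbK)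
    have hcu : IsUnit c := by
      by_contra hcu
      have hcM : c ∈ M := hcu
      apply hb0
      rw [← hc, mul_comm]
      exact hzM c hcM
    have hbI : b ∈ I := by
      have h1 : Ideal.span {a} * M ^ (t - 1) ≤ Ideal.span {a} := Ideal.mul_le_left
      have h2 : Ideal.span {a} ≤ I := (Ideal.span_singleton_le_iff_mem _).mpr haI
      exact h2 (h1 hbK)
    obtain ⟨u, rfl⟩ := hcu
    have hzval : z = (↑u⁻¹ : R) * b := by
      rw [← hc, ← mul_assoc]
      simp
    rw [hzval]
    exact Ideal.mul_mem_left _ _ hbI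
  -- key: J is not contained in the socle
  have hJns : ¬ J ≤ Ideal.span {z} := by
    intro hJz
    have hind : ∀ j : ℕ, ∀ k : ℕ, 2 ≤ k → M ^ (k + j) = ⊥ →
        ∃ w ∈ M ^ k, M ^ k ≤ Ideal.span {w} ⊔ M ^ (k + 1) := by
      intro j
      induction j with
      | zero =>
        intro k _ hbot
        rw [Nat.add_zero] at hbot
        exact ⟨0, by rw [hbot]; exact Submodule.zero_mem _, by rw [hbot]; exact bot_le⟩
      | succ j ih =>
        intro k hk hbot
        by_cases hk1 : M ^ (k + 1) = ⊥
        · by_cases hk0 : M ^ k = ⊥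
          · exact ⟨0, by rw [hk0]; exact Submodule.zero_mem _, by rw [hk0]; exact bot_le⟩
          · refine ⟨z, hess _ hk0, ?_⟩
            have hle : M ^ k ≤ Ideal.span {z} := by
              rw [← hsoc]
              intro a ha
              rw [Submodule.mem_colon]
              intro p hp
              have hap : a * p ∈ M ^ k * M := Ideal.mul_mem_mul ha hp
              rw [← pow_succ, hk1] at hap
              simpa using hap
            exact hle.trans le_sup_left
        · obtain ⟨v, hvM, hv⟩ := ih (k + 1) (by omega) (by rw [← hbot]; ring_nf)
          have hvx : v ∈ Ideal.span {x} * M ^ k := by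
            rw [← hstep k (by omega)]; exact hvM
          obtain ⟨w, hwM, hw⟩ := Ideal.mem_span_singleton_mul.mp hvx
          refine ⟨w, hwM, ?_⟩
          intro a ha
          have hxa : x * a ∈ M ^ (k + 1) := by
            rw [pow_succ, mul_comm]
            exact Ideal.mul_mem_mul hx ha
          obtain ⟨p, hp, q, hq, hpq⟩ := Submodule.mem_sup.mp (hv hxa)
          obtain ⟨r, hr⟩ := Ideal.mem_span_singleton'.mp hp
          have hq' : q ∈ Ideal.span {x} * M ^ (k + 1) := by
            rw [← hstep (k + 1) (by omega)]; exact hq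
          obtain ⟨m', hm'M, hm'⟩ := Ideal.mem_span_singleton_mul.mp hq'
          have hker : x * (a - r * w - m') = 0 := by
            have h1 : r * v + q = x * a := hpq.symm ▸ (by rw [hr])
            rw [← hw, ← hm'] at h1
            linear_combination -h1
          have hmemk : a - r * w - m' ∈ M ^ k := by
            have h1 : m' ∈ M ^ k := Ideal.pow_le_pow_right (by omega) hm'M
            exact sub_mem (sub_mem ha (Ideal.mul_mem_left _ _ hwM)) h1
          have hmem2 : a - r * w - m' ∈ M ^ 2 := Ideal.pow_le_pow_right hk hmemk
          have hJ' : a - r * w - m' ∈ J := by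
            refine Submodule.mem_inf.mpr ⟨?_, hmem2⟩
            rw [Submodule.mem_colon]
            intro p' hp'
            obtain ⟨c, hc⟩ := Ideal.mem_span_singleton'.mp hp'
            have heq : (a - r * w - m') • p' = c * (x * (a - r * w - m')) := by
              rw [← hc, smul_eq_mul]; ring
            rw [heq, hker, mul_zero]
            exact Submodule.zero_mem ⊥
          have hzk : a - r * w - m' ∈ M ^ (k + 1) :=
            ((Ideal.span_singleton_le_iff_mem _).mpr (hess _ hk1)) (hJz hJ')
          have ha' : a = r * w + ((a - r * w - m') + m') := by ring
          rw [ha']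
          exact Submodule.add_mem _
            (Submodule.mem_sup_left (Ideal.mem_span_singleton'.mpr ⟨r, rfl⟩))
            (Submodule.mem_sup_right (Submodule.add_mem _ hzk hm'M))
    obtain ⟨w, hwM2, hw2⟩ := hind n 2 le_rfl
      (by rw [pow_add, hn]; simp)
    have hiter : ∀ j : ℕ, M ^ 2 ≤ Ideal.span {w} ⊔ M ^ (3 + j) := by
      intro j
      induction j with
      | zero => simpa using hw2
      | succ j ih =>
        have h3 : M ^ 3 ≤ Ideal.span {w} ⊔ M ^ (3 + (j + 1)) := by
          have h1 : M ^ 3 = M * M ^ 2 := by ring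
          have h2 : M * M ^ 2 ≤ M * (Ideal.span {w} ⊔ M ^ (3 + j)) :=
            Ideal.mul_mono_right ih
          rw [Ideal.mul_sup] at h2
          rw [h1]
          refine h2.trans (sup_le_sup Ideal.mul_le_right (le_of_eq ?_))
          rw [← pow_succ']
          ring_nf
        have hbase : M ^ 2 ≤ Ideal.span {w} ⊔ M ^ 3 := by simpa using hw2
        refine hbase.trans ?_
        refine sup_le le_sup_left h3
    have hprin : M ^ 2 = Ideal.span {w} := by
      refine le_antisymm ?_ ((Ideal.span_singleton_le_iff_mem _).mpr hwM2)
      have h1 : M ^ (3 + n) = ⊥ := by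
        rw [pow_add, hn]; simp
      have := hiter n
      rwa [h1, sup_bot_eq] at this
    have hmu : mu (M ^ 2) ≤ 1 := by
      apply Nat.sInf_le
      exact ⟨{w}, Finset.card_singleton w, by simpa using hprin.symm⟩
    rw [hm] at hmu
    omega
  constructor
  · apply le_antisymm
    · rw [Ideal.mul_le]
      intro r hr s hs
      rw [Submodule.mem_colon]
      intro p hp
      have hrp : r * p ∈ Ideal.span {x} * M := by
        rw [← hxm, sq]
        exact Ideal.mul_mem_mul hr hp
      obtain ⟨b, hbM, hb⟩ := Ideal.mem_span_singleton_mul.mp hrp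
      have hsx : s * x = 0 := by
        have h1 := Submodule.mem_colon.mp (Submodule.mem_inf.mp hs).1 x
          (Ideal.mem_span_singleton_self x)
        simpa using h1
      have heq : (r * s) • p = (s * x) * b := by
        rw [smul_eq_mul]
        linear_combination (-s) * hb
      rw [heq, hsx, zero_mul]
      exact Submodule.zero_mem ⊥
    · rw [hsoc, Ideal.span_singleton_le_iff_mem]
      apply hess
      intro hbot
      apply hJns
      intro s hs
      rw [← hsoc, Submodule.mem_colon]
      intro p hp
      have h1 : s * p ∈ J * M := Ideal.mul_mem_mul hs hp
      rw [mul_comm J M, hbot] at h1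
      simpa using h1
  · rw [hsoc]
    exact hJns
end

section
/- Let (R, m) be a Noetherian local ring with m^2 = x·m for some x ∈ m. If for some t ≥ 2 one has µ(m^t) > µ(m^{t+1}), then there exists y ∈ m^t \ m^{t+1} and z ∈ m^{t+1} such that x·(y − z) = 0 and y − z ∈ (0 :_R x) ∩ m^2 with y − z ∉ m^{t+1}. -/
open IsLocalRing

/-- Let `(R, m)` be a Noetherian local ring with `m^2 = x·m` for some `x ∈ m`.
If for some `t ≥ 2` one has `µ(m^t) > µ(m^{t+1})`, then there exist `y ∈ m^t \ m^{t+1}` and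
`z ∈ m^{t+1}` such that `x·(y − z) = 0`, `y − z ∈ (0 :_R x) ∩ m^2` and `y − z ∉ m^{t+1}`. -/
theorem stmt7 {R : Type*} [CommRing R] [IsNoetherianRing R] [IsLocalRing R]
    (x : R) (hx : x ∈ maximalIdeal R)
    (hxm : (maximalIdeal R) ^ 2 = Ideal.span {x} * maximalIdeal R)
    (t : ℕ) (ht : 2 ≤ t)
    (hmu : mu ((maximalIdeal R) ^ (t + 1)) < mu ((maximalIdeal R) ^ t)) :
    ∃ y ∈ (maximalIdeal R) ^ t, y ∉ (maximalIdeal R) ^ (t + 1) ∧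
      ∃ z ∈ (maximalIdeal R) ^ (t + 1),
        x * (y - z) = 0 ∧
        y - z ∈ Submodule.colon ⊥ ((Ideal.span {x} : Ideal R) : Set R) ⊓ (maximalIdeal R) ^ 2 ∧
        y - z ∉ (maximalIdeal R) ^ (t + 1) := by
  classical
  set m := maximalIdeal R with hm
  -- m^(i+2) = span{x} * m^(i+1) for all i
  have hpow : ∀ i : ℕ, m ^ (i + 2) = Ideal.span {x} * m ^ (i + 1) := by
    intro i
    calc m ^ (i + 2) = m ^ i * m ^ 2 := by ring
    _ = m ^ i * (Ideal.span {x} * m) := by rw [hxm]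
    _ = Ideal.span {x} * m ^ (i + 1) := by ring
  -- key claim
  have key : ∃ y, y ∈ m ^ t ∧ y ∉ m ^ (t + 1) ∧ x * y ∈ m ^ (t + 2) := by
    by_contra h
    have h' : ∀ y ∈ m ^ t, x * y ∈ m ^ (t + 2) → y ∈ m ^ (t + 1) := by
      intro y hy hxy
      by_contra hn
      exact h ⟨y, hy, hn, hxy⟩
    -- take a minimal generating set of m^(t+1)
    have hfg : (m ^ (t + 1)).FG := (isNoetherianRing_iff_ideal_fg R).mp ‹_› _
    obtain ⟨s0, hs0⟩ := hfg
    have hne : (mu (m ^ (t + 1))) ∈ {n | ∃ s : Finset R, s.card = n ∧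
        Ideal.span (s : Set R) = m ^ (t + 1)} :=
      Nat.sInf_mem ⟨s0.card, s0, rfl, hs0⟩
    obtain ⟨s, hcard, hspan⟩ := hne
    -- each generator g = x * a g for some a g ∈ m^t
    obtain ⟨k, hk⟩ : ∃ k, t = k + 1 := ⟨t - 1, by omega⟩
    have hxt : m ^ (t + 1) = Ideal.span {x} * m ^ t := by
      rw [hk]; exact hpow k
    have ha : ∀ g : {g // g ∈ s}, ∃ a, a ∈ m ^ t ∧ x * a = (g : R) := by
      intro g
      have hg : (g : R) ∈ m ^ (t + 1) := by
        rw [← hspan]; exact Ideal.subset_span g.2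
      rw [hxt] at hg
      obtain ⟨a, ha1, ha2⟩ := Ideal.mem_span_singleton_mul.mp hg
      exact ⟨a, ha1, ha2⟩
    choose a haT haX using ha
    set T : Finset R := s.attach.image a with hT
    have hTsub : Ideal.span (T : Set R) ≤ m ^ t := by
      rw [Ideal.span_le]
      intro r hr
      simp only [hT, Finset.coe_image, Set.mem_image] at hr
      obtain ⟨g, _, rfl⟩ := hr
      exact haT g
    -- m^t ≤ span T ⊔ m • m^t
    have hle : m ^ t ≤ Ideal.span (T : Set R) ⊔ m • (m ^ t) := by
      intro b hb
      have hxb : x * b ∈ Ideal.span {x} * Ideal.span (T : Set R) := by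
        have hxb1 : x * b ∈ m ^ (t + 1) := by
          rw [hxt]
          exact Ideal.mem_span_singleton_mul.mpr ⟨b, hb, rfl⟩
        rw [← hspan] at hxb1
        refine Ideal.span_le.mpr ?_ hxb1
        intro g hg
        obtain ⟨a', ha'1, ha'2⟩ := Ideal.mem_span_singleton_mul.mp
          (by rw [← hxt, ← hspan]; exact Ideal.subset_span hg : g ∈ Ideal.span {x} * m ^ t)
        have : a ⟨g, hg⟩ ∈ Ideal.span (T : Set R) := by
          apply Ideal.subset_span
          simp only [hT, Finset.coe_image, Set.mem_image]
          exact ⟨⟨g, hg⟩, Finset.mem_attach _ _, rfl⟩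
        have h2 := Ideal.mul_mem_mul (Ideal.mem_span_singleton_self x) this
        rw [haX ⟨g, hg⟩] at h2
        exact h2
      obtain ⟨c, hc1, hc2⟩ := Ideal.mem_span_singleton_mul.mp hxb
      have hbc : b - c ∈ m ^ t := sub_mem hb (hTsub hc1)
      have hbc2 : b - c ∈ m ^ (t + 1) := by
        apply h' _ hbc
        rw [mul_sub, hc2, sub_self]
        exact zero_mem _
      have : b = c + (b - c) := by ring
      rw [this]
      refine add_mem (Submodule.mem_sup_left hc1) (Submodule.mem_sup_right ?_)
      rwa [Ideal.smul_eq_mul, ← pow_succ']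
    have hTspan : Ideal.span (T : Set R) = m ^ t := by
      refine le_antisymm hTsub ?_
      exact Submodule.le_of_le_smul_of_le_jacobson_bot
        ((isNoetherianRing_iff_ideal_fg R).mp ‹_› _)
        (IsLocalRing.maximalIdeal_le_jacobson ⊥) hle
    have hmuT : mu (m ^ t) ≤ T.card := Nat.sInf_le ⟨T, rfl, hTspan⟩
    have hTcard : T.card ≤ s.card := (Finset.card_image_le).trans Finset.card_attach.le
    omega
  obtain ⟨y, hy, hy', hxy⟩ := key
  -- x*y ∈ m^(t+2) = span{x} * m^(t+1), so x*y = x*z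
  rw [hpow t] at hxy
  obtain ⟨z, hz, hzx⟩ := Ideal.mem_span_singleton_mul.mp hxy
  refine ⟨y, hy, hy', z, hz, ?_, Submodule.mem_inf.mpr ⟨?_, ?_⟩, ?_⟩
  · rw [mul_sub, hzx, sub_self]
  · rw [Submodule.mem_colon]
    intro p hp
    obtain ⟨c, rfl⟩ := Ideal.mem_span_singleton'.mp hp
    rw [Submodule.mem_bot, smul_eq_mul]
    calc (y - z) * (c * x) = c * (x * (y - z)) := by ring
    _ = 0 := by rw [mul_sub, hzx, sub_self, mul_zero]
  · have h1 : y - z ∈ m ^ t := sub_mem hy (Ideal.pow_le_pow_right (by omega) hz)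
    exact Ideal.pow_le_pow_right ht h1
  · intro hcon
    exact hy' (by simpa using add_mem hcon hz)
end

section
/- Let (R, m, k) be a stretched Artinian local ring (i.e. µ(m^2) ≤ 1) with an element x_1 ∈ soc(R) \ m^2, where m = (x_1, x_2, ..., x_n) is a minimal generating set. Then (x_1) ∩ (x_2, ..., x_n) = 0 and R ≅ R/(x_1) ×_k R/(x_2, ..., x_n) as a fibre product over the residue field. -/
open IsLocalRing

/-- Let `(R, m, k)` be a stretched Artinian local ring (`µ(m^2) ≤ 1`) with a
minimal generating set `x 0, …, x (n-1)` of `m` such that `x 0 ∈ soc(R) \ m^2`.  Then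
`(x 0) ∩ (x 1, …, x (n-1)) = 0` and `R ≅ R/(x 0) ×_k R/(x 1, …, x (n-1))`: the natural map
`R → R/(x 0) × R/(x 1, …, x (n-1))` is injective with range the fibre product over the
residue field `k = R/m`. -/
theorem stmt9 {R : Type*} [CommRing R] [IsArtinianRing R] [IsLocalRing R]
    (hstretched : mu ((maximalIdeal R) ^ 2) ≤ 1)
    (n : ℕ) (hn0 : 0 < n) (x : Fin n → R)
    (hspan : Ideal.span (Set.range x) = maximalIdeal R)
    (hmin : mu (maximalIdeal R) = n)
    (hx0soc : x ⟨0, hn0⟩ ∈ Submodule.colon ⊥ ((maximalIdeal R : Ideal R) : Set R))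
    (hx0 : x ⟨0, hn0⟩ ∉ (maximalIdeal R) ^ 2) :
    Ideal.span {x ⟨0, hn0⟩} ⊓ Ideal.span (x '' {i : Fin n | i ≠ ⟨0, hn0⟩}) = ⊥ ∧
    Function.Injective ((Ideal.Quotient.mk (Ideal.span {x ⟨0, hn0⟩})).prod
      (Ideal.Quotient.mk (Ideal.span (x '' {i : Fin n | i ≠ ⟨0, hn0⟩})))) ∧
    Set.range ((Ideal.Quotient.mk (Ideal.span {x ⟨0, hn0⟩})).prod
      (Ideal.Quotient.mk (Ideal.span (x '' {i : Fin n | i ≠ ⟨0, hn0⟩})))) =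
      {p : (R ⧸ Ideal.span {x ⟨0, hn0⟩}) ×
            (R ⧸ Ideal.span (x '' {i : Fin n | i ≠ ⟨0, hn0⟩})) |
        Ideal.Quotient.factor (S := _) (T := maximalIdeal R)
            (by rw [← hspan]; exact Ideal.span_mono (by
              rintro _ rfl; exact Set.mem_range_self _)) p.1 =
          Ideal.Quotient.factor (S := _) (T := maximalIdeal R)
            (by rw [← hspan]; exact Ideal.span_mono (by
              rintro _ ⟨i, _, rfl⟩; exact Set.mem_range_self i)) p.2} := by
  set x0 := x ⟨0, hn0⟩ with hx0def
  set I := Ideal.span {x0} with hI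
  set J := Ideal.span (x '' {i : Fin n | i ≠ ⟨0, hn0⟩}) with hJ
  -- I ⊔ J = maximal ideal
  have hunion : Set.range x = {x0} ∪ x '' {i : Fin n | i ≠ ⟨0, hn0⟩} := by
    ext a
    constructor
    · rintro ⟨i, rfl⟩
      by_cases h : i = ⟨0, hn0⟩
      · exact Or.inl (by rw [h]; rfl)
      · exact Or.inr ⟨i, h, rfl⟩
    · rintro (h | ⟨i, _, rfl⟩)
      · exact ⟨⟨0, hn0⟩, h.symm⟩
      · exact ⟨i, rfl⟩
  have hsup : I ⊔ J = maximalIdeal R := by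
    rw [hI, hJ, ← Ideal.span_union, ← hunion, hspan]
  -- x0 ∉ J
  have hx0J : x0 ∉ J := by
    intro h
    have hIJ : I ≤ J := by
      rw [hI, Ideal.span_le, Set.singleton_subset_iff]; exact h
    have hmJ : maximalIdeal R = J := by
      rw [← hsup]; exact le_antisymm (sup_le hIJ le_rfl) le_sup_right
    classical
    have hscoe : (((Finset.univ.filter (fun i : Fin n => i ≠ ⟨0, hn0⟩)).image x :
        Finset R) : Set R) = x '' {i : Fin n | i ≠ ⟨0, hn0⟩} := by
      rw [Finset.coe_image, Finset.coe_filter]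
      simp
    have hmu : mu (maximalIdeal R) ≤
        ((Finset.univ.filter (fun i : Fin n => i ≠ ⟨0, hn0⟩)).image x).card :=
      Nat.sInf_le ⟨_, rfl, by rw [hscoe, ← hJ, hmJ]⟩
    have h1 : ((Finset.univ.filter (fun i : Fin n => i ≠ ⟨0, hn0⟩)).image x).card ≤
        (Finset.univ.filter (fun i : Fin n => i ≠ ⟨0, hn0⟩)).card :=
      Finset.card_image_le
    have h2 : (Finset.univ.filter (fun i : Fin n => i ≠ ⟨0, hn0⟩)).card <
        (Finset.univ : Finset (Fin n)).card := by
      apply Finset.card_lt_card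
      rw [Finset.ssubset_univ_iff]
      intro hEq
      have h3 : (⟨0, hn0⟩ : Fin n) ∈ Finset.univ.filter
          (fun i : Fin n => i ≠ ⟨0, hn0⟩) := by rw [hEq]; exact Finset.mem_univ _
      simp at h3
    have h4 : (Finset.univ : Finset (Fin n)).card = n := by simp
    omega
  -- soc property
  have hsoc : ∀ a ∈ maximalIdeal R, a * x0 = 0 := by
    intro a ha
    have := Submodule.mem_colon.mp hx0soc a ha
    simpa [mul_comm] using this
  -- intersection is zero
  have hinter : I ⊓ J = ⊥ := by
    refine le_bot_iff.mp fun a ⟨haI, haJ⟩ => ?_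
    obtain ⟨r, rfl⟩ := Ideal.mem_span_singleton'.mp haI
    by_cases hr : r ∈ maximalIdeal R
    · simpa using hsoc r hr
    · exfalso
      have hu : IsUnit r := by
        by_contra h
        exact hr ((IsLocalRing.mem_maximalIdeal r).mpr h)
      obtain ⟨u, rfl⟩ := hu
      refine hx0J ?_
      have : (↑u⁻¹ : R) * (↑u * x0) ∈ J := Ideal.mul_mem_left _ _ haJ
      rwa [← mul_assoc, Units.inv_mul, one_mul] at this
  refine ⟨hinter, ?_, ?_⟩
  · refine (injective_iff_map_eq_zero _).mpr fun a ha => ?_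
    rw [Prod.ext_iff] at ha
    obtain ⟨ha1, ha2⟩ := ha
    have haI : a ∈ I := by
      rwa [hI, ← Ideal.Quotient.eq_zero_iff_mem]
    have haJ : a ∈ J := by
      rwa [hJ, ← Ideal.Quotient.eq_zero_iff_mem]
    have : a ∈ I ⊓ J := ⟨haI, haJ⟩
    rwa [hinter, Ideal.mem_bot] at this
  · ext p
    constructor
    · rintro ⟨r, rfl⟩
      show Ideal.Quotient.factor _ _ = Ideal.Quotient.factor _ _
      simp only [RingHom.prod_apply, Ideal.Quotient.factor_mk]
    · intro hp
      obtain ⟨a, ha⟩ := Ideal.Quotient.mk_surjective p.1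
      obtain ⟨b, hb⟩ := Ideal.Quotient.mk_surjective p.2
      have hab : Ideal.Quotient.mk (maximalIdeal R) a
          = Ideal.Quotient.mk (maximalIdeal R) b := by
        have := hp
        simp only [Set.mem_setOf_eq, ← ha, ← hb, Ideal.Quotient.factor_mk] at this
        exact this
      have hmem : a - b ∈ I ⊔ J := by
        rw [hsup]
        exact (Ideal.Quotient.mk_eq_mk_iff_sub_mem a b).mp hab
      obtain ⟨u, hu, v, hv, huv⟩ := Submodule.mem_sup.mp hmem
      refine ⟨a - u, ?_⟩
      have h1 : Ideal.Quotient.mk I (a - u) = p.1 := by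
        rw [← ha, Ideal.Quotient.mk_eq_mk_iff_sub_mem]
        simpa using I.neg_mem hu
      have h2 : Ideal.Quotient.mk J (a - u) = p.2 := by
        rw [← hb, Ideal.Quotient.mk_eq_mk_iff_sub_mem]
        have : a - u - b = v := by linear_combination -huv
        rw [this]; exact hv
      rw [RingHom.prod_apply, h1, h2]
end
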